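/- arXiv:1111.6692 — 2 statements merged into one kernel-verified Lean document; each statement's English description precedes it below -/
import Mathlib

section
/- There is a constant C such that for all q, N ≥ 2 with q ≤ N and all a coprime to q, ψ(N; q, a) ≤ C · (N/q) · log N, where ψ(N;q,a) = ∑_{n ≤ N, n ≡ a mod q} Λ(n). -/
open ArithmeticFunction in
theorem stmt_4 :
    ∃ C : ℝ, 0 < C ∧ ∀ q N : ℕ, 2 ≤ q → 2 ≤ N → q ≤ N →
      ∀ a : ℕ, Nat.Coprime a q →
        ∑ n ∈ (Finset.Icc 1 N).filter (fun n => n % q = a % q), Λ n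
          ≤ C * ((N : ℝ) / q) * Real.log N := by
  refine ⟨2, by norm_num, fun q N hq hN hqN a _ => ?_⟩
  set S := (Finset.Icc 1 N).filter (fun n => n % q = a % q) with hS
  have hq0 : 0 < q := by omega
  -- each term is at most log N
  have hterm : ∀ n ∈ S, Λ n ≤ Real.log N := by
    intro n hn
    simp only [hS, Finset.mem_filter, Finset.mem_Icc] at hn
    calc Λ n ≤ Real.log n := ArithmeticFunction.vonMangoldt_le_log
    _ ≤ Real.log N := Real.log_le_log (by exact_mod_cast hn.1.1) (by exact_mod_cast hn.1.2)
  -- cardinality bound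
  have hcard : S.card ≤ N / q + 1 := by
    have : S.card ≤ (Finset.range (N / q + 1)).card := by
      apply Finset.card_le_card_of_injOn (fun n => n / q)
      · intro n hn
        simp only [Finset.mem_coe, hS, Finset.mem_filter, Finset.mem_Icc] at hn
        simp only [Finset.mem_coe, Finset.mem_range, Nat.lt_succ_iff]
        exact Nat.div_le_div_right hn.1.2
      · intro n₁ h₁ n₂ h₂ h
        simp only [Finset.mem_coe, hS, Finset.mem_filter, Finset.mem_Icc] at h₁ h₂
        have e1 := Nat.div_add_mod n₁ q
        have e2 := Nat.div_add_mod n₂ q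
        have hm : n₁ % q = n₂ % q := by rw [h₁.2, h₂.2]
        have h' : n₁ / q = n₂ / q := h
        rw [h', hm] at e1
        omega
    simpa using this
  have hlogN : 0 ≤ Real.log N := Real.log_nonneg (by exact_mod_cast (by omega : 1 ≤ N))
  have hsum : ∑ n ∈ S, Λ n ≤ (S.card : ℝ) * Real.log N := by
    calc ∑ n ∈ S, Λ n ≤ ∑ _n ∈ S, Real.log N := Finset.sum_le_sum hterm
    _ = (S.card : ℝ) * Real.log N := by rw [Finset.sum_const, nsmul_eq_mul]
  refine hsum.trans ?_
  have hqR : (0:ℝ) < q := by exact_mod_cast hq0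
  have h1 : (1:ℝ) ≤ (N : ℝ) / q := by
    rw [le_div_iff₀ hqR]; simpa using (by exact_mod_cast hqN : (q:ℝ) ≤ N)
  have hfloor : ((N / q : ℕ) : ℝ) ≤ (N : ℝ) / q := by
    exact_mod_cast Nat.cast_div_le
  have hcardR : (S.card : ℝ) ≤ 2 * ((N : ℝ) / q) := by
    calc (S.card : ℝ) ≤ ((N / q : ℕ) : ℝ) + 1 := by exact_mod_cast hcard
    _ ≤ (N : ℝ) / q + (N : ℝ) / q := add_le_add hfloor h1
    _ = 2 * ((N : ℝ) / q) := by ring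
  exact mul_le_mul_of_nonneg_right hcardR hlogN
end

section
/- Let m = p₁^{a₁}···p_r^{a_r} and let H be a finite set of k integers all divisible by m with ν_p(H) < p for all primes p. Define ρ₁ multiplicatively on squarefree integers by ρ₁(p) = 0 if p | m and ρ₁(p) = ν_p(H) otherwise, and define ρ₃ by ρ₃(p) = 0 if p | m and ρ₃(p) = p(ν_p(H) − 1)/(p − 1) otherwise. Then the ratio of singular series satisfies 𝔖(ρ₃)/𝔖(ρ₁) = ∏_{i=1}^r (1 − 1/p_i) = φ(m)/m, where 𝔖(ρ) = ∏_p (1 − ρ(p)/p)(1 − 1/p)^{−k} for ρ = ρ₁ and 𝔖(ρ₃) = ∏_p (1 − ρ₃(p)/p)(1 − 1/p)^{−(k−1)}. -/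
open Real Filter

lemma aux_pow_bounds (x : ℝ) (hx0 : 0 ≤ x) (hx1 : x ≤ 1) (k : ℕ) :
    1 - k * x ≤ (1 - x) ^ k ∧ (1 - x) ^ k ≤ 1 - k * x + (k : ℝ) ^ 2 * x ^ 2 := by
  induction k with
  | zero => simp
  | succ n ih =>
    have h1 := mul_le_mul_of_nonneg_right ih.1 (by linarith : (0:ℝ) ≤ 1 - x)
    have h2 := mul_le_mul_of_nonneg_right ih.2 (by linarith : (0:ℝ) ≤ 1 - x)
    rw [pow_succ]
    constructor
    · push_cast
      nlinarith [h1, mul_nonneg (show (0:ℝ) ≤ (n:ℝ) by positivity) (sq_nonneg x)]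
    · push_cast
      nlinarith [h2, mul_nonneg (mul_nonneg (show (0:ℝ) ≤ (n:ℝ)^2 by positivity)
        (sq_nonneg x)) hx0, mul_nonneg (show (0:ℝ) ≤ (n:ℝ) by positivity) (sq_nonneg x)]

theorem stmt_13 (m k : ℕ) (hm : 0 < m) (H : Finset ℤ) (hcard : H.card = k)
    (hk : 1 ≤ k) (hH : ∀ h ∈ H, (m : ℤ) ∣ h)
    (ν : ℕ → ℕ)
    (hν : ∀ p : ℕ, ν p = (H.image (fun h : ℤ => ((h : ℤ) : ZMod p))).card)
    (hνp : ∀ p : ℕ, p.Prime → ν p < p)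
    (ρ₁ ρ₃ : ℕ → ℝ)
    (hρ₁ : ∀ p : ℕ, ρ₁ p = if p ∣ m then 0 else (ν p : ℝ))
    (hρ₃ : ∀ p : ℕ, ρ₃ p = if p ∣ m then 0
      else (p : ℝ) * ((ν p : ℝ) - 1) / ((p : ℝ) - 1)) :
    (∏' p : Nat.Primes, (1 - ρ₃ p / ((p : ℕ) : ℝ)) *
        (1 - 1 / ((p : ℕ) : ℝ)) ^ (-((k : ℤ) - 1))) /
      (∏' p : Nat.Primes, (1 - ρ₁ p / ((p : ℕ) : ℝ)) *
        (1 - 1 / ((p : ℕ) : ℝ)) ^ (-(k : ℤ)))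
      = ∏ p ∈ m.primeFactors, (1 - 1 / (p : ℝ)) ∧
    ∏ p ∈ m.primeFactors, (1 - 1 / (p : ℝ)) = (Nat.totient m : ℝ) / m := by
  classical
  -- second conjunct
  have htot : ∏ p ∈ m.primeFactors, (1 - 1 / (p : ℝ)) = (Nat.totient m : ℝ) / m := by
    have h := Nat.totient_eq_mul_prod_factors m
    have h' := congrArg (fun q : ℚ => (q : ℝ)) h
    push_cast at h'
    have hm0 : (m : ℝ) ≠ 0 := Nat.cast_ne_zero.mpr hm.ne'
    rw [h', mul_comm, mul_div_assoc, div_self hm0, mul_one]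
    simp [one_div]
  refine ⟨?_, htot⟩
  -- basic facts per prime
  have hpc : ∀ p : Nat.Primes, (1:ℝ) < ((p : ℕ) : ℝ) := fun p => by
    exact_mod_cast p.2.one_lt
  have hbase : ∀ p : Nat.Primes, (0:ℝ) < 1 - 1 / ((p : ℕ) : ℝ) := fun p => by
    have := hpc p
    have h0 : (0:ℝ) < ((p : ℕ) : ℝ) := by linarith
    rw [sub_pos, div_lt_one h0]; linarith
  set A : Nat.Primes → ℝ := fun p => (1 - ρ₃ p / ((p : ℕ) : ℝ)) *
      (1 - 1 / ((p : ℕ) : ℝ)) ^ (-((k : ℤ) - 1)) with hA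
  set B : Nat.Primes → ℝ := fun p => (1 - ρ₁ p / ((p : ℕ) : ℝ)) *
      (1 - 1 / ((p : ℕ) : ℝ)) ^ (-(k : ℤ)) with hB
  set c : Nat.Primes → ℝ := fun p => if (p : ℕ) ∣ m then 1 - 1 / ((p : ℕ) : ℝ) else 1 with hc
  -- pointwise identity A = c * B
  have hAB : ∀ p : Nat.Primes, A p = c p * B p := by
    intro p
    have hx : (1 - 1 / ((p : ℕ) : ℝ)) ≠ 0 := (hbase p).ne'
    have hz : (1 - 1 / ((p : ℕ) : ℝ)) ^ (-((k : ℤ) - 1))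
        = (1 - 1 / ((p : ℕ) : ℝ)) * (1 - 1 / ((p : ℕ) : ℝ)) ^ (-(k : ℤ)) := by
      rw [show -((k : ℤ) - 1) = 1 + -(k : ℤ) by ring, zpow_add₀ hx, zpow_one]
    have key : (1 - ρ₃ p / ((p : ℕ) : ℝ)) * (1 - 1 / ((p : ℕ) : ℝ))
        = c p * (1 - ρ₁ p / ((p : ℕ) : ℝ)) := by
      by_cases hdvd : (p : ℕ) ∣ m
      · simp [hc, hdvd, hρ₁, hρ₃]
      · have hp0 : ((p : ℕ) : ℝ) ≠ 0 := by have := hpc p; intro h; rw [h] at this; linarith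
        have hp1 : ((p : ℕ) : ℝ) - 1 ≠ 0 := by have := hpc p; intro h; linarith
        simp only [hc, hdvd, if_false, hρ₁, hρ₃, one_mul]
        field_simp
        ring
      
    simp only [hA, hB, hz]
    calc (1 - ρ₃ p / ((p : ℕ) : ℝ)) *
          ((1 - 1 / ((p : ℕ) : ℝ)) * (1 - 1 / ((p : ℕ) : ℝ)) ^ (-(k : ℤ)))
        = ((1 - ρ₃ p / ((p : ℕ) : ℝ)) * (1 - 1 / ((p : ℕ) : ℝ))) *
            (1 - 1 / ((p : ℕ) : ℝ)) ^ (-(k : ℤ)) := by ring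
      _ = (c p * (1 - ρ₁ p / ((p : ℕ) : ℝ))) * (1 - 1 / ((p : ℕ) : ℝ)) ^ (-(k : ℤ)) := by
          rw [key]
      _ = c p * ((1 - ρ₁ p / ((p : ℕ) : ℝ)) * (1 - 1 / ((p : ℕ) : ℝ)) ^ (-(k : ℤ))) := by ring
  -- positivity of B
  have hBpos : ∀ p : Nat.Primes, 0 < B p := by
    intro p
    have h1 : (0:ℝ) < 1 - ρ₁ p / ((p : ℕ) : ℝ) := by
      rw [hρ₁]
      by_cases hdvd : (p : ℕ) ∣ m
      · simp [hdvd]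
      · simp only [hdvd, if_false]
        have hp0 : (0:ℝ) < ((p : ℕ) : ℝ) := by have := hpc p; linarith
        rw [sub_pos, div_lt_one hp0]
        exact_mod_cast hνp p p.2
    exact mul_pos h1 (zpow_pos (hbase p) _)
  -- eventually ν p = k  and bound for log B
  set L : ℕ := (H ×ˢ H).sup (fun x => (x.1 - x.2).natAbs) with hL
  set N : ℕ := m + 4 * k + L + 2 with hN
  have hνk : ∀ p : Nat.Primes, L < (p : ℕ) → ν (p : ℕ) = k := by
    intro p hp
    rw [hν, ← hcard]
    apply Finset.card_image_of_injOn
    intro a ha b hb hab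
    have hmod : ((p : ℕ) : ℤ) ∣ a - b := by
      have := (ZMod.intCast_eq_intCast_iff' a b (p : ℕ)).mp hab
      exact Int.ModEq.dvd this.symm
    have hab' : (a, b) ∈ H ×ˢ H := Finset.mem_product.mpr ⟨Finset.mem_coe.mp ha,
      Finset.mem_coe.mp hb⟩
    have habs : (a - b).natAbs ≤ L :=
      Finset.le_sup (f := fun x : ℤ × ℤ => (x.1 - x.2).natAbs) hab'
    have : a - b = 0 := by
      refine Int.eq_zero_of_abs_lt_dvd hmod ?_
      rw [Int.abs_eq_natAbs]
      exact_mod_cast lt_of_le_of_lt habs hp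
    linarith
  have hlogbound : ∀ p : Nat.Primes, N ≤ (p : ℕ) →
      ‖Real.log (B p)‖ ≤ 8 * (k:ℝ)^2 * (1 / ((p : ℕ) : ℝ))^2 := by
    intro p hp
    have hpm : ¬ (p : ℕ) ∣ m := by
      intro hdvd
      have := Nat.le_of_dvd hm hdvd
      omega
    have hνpk : ν (p : ℕ) = k := hνk p (by omega)
    set x : ℝ := 1 / ((p : ℕ) : ℝ) with hxdef
    have hp0 : (0:ℝ) < ((p : ℕ) : ℝ) := by have := hpc p; linarith
    have hx0 : 0 < x := by positivity
    have hpk : ((4 * k : ℕ) : ℝ) ≤ ((p : ℕ) : ℝ) := Nat.cast_le.mpr (by omega)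
    have hkx : (k:ℝ) * x ≤ 1 / 4 := by
      rw [hxdef, mul_one_div, div_le_div_iff₀ hp0 (by norm_num)]
      push_cast at hpk ⊢
      linarith
    have hx1 : x ≤ 1 := by rw [hxdef, div_le_one hp0]; linarith [hpc p]
    obtain ⟨hlow, hhigh⟩ := aux_pow_bounds x hx0.le hx1 k
    have hy0 : 0 < (1 - x) ^ k := by
      apply pow_pos
      rw [hxdef, sub_pos, div_lt_one hp0]
      exact hpc p
    have hBval : B p = (1 - (k:ℝ) * x) * ((1 - x) ^ k)⁻¹ := by
      simp only [hB, hρ₁, hpm, if_false, hνpk, hxdef]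
      rw [zpow_neg, zpow_natCast, mul_one_div]
    have hkx0 : 0 ≤ (k:ℝ) * x := by positivity
    have hB1 : B p ≤ 1 := by
      rw [hBval, ← div_eq_mul_inv, div_le_one hy0]; exact hlow
    have hBlow : 1 - 4 * (k:ℝ)^2 * x^2 ≤ B p := by
      have key : (1 - 4 * (k:ℝ)^2 * x^2) * ((1 - x) ^ k) ≤ 1 - (k:ℝ) * x := by
        nlinarith [sq_nonneg ((k:ℝ)*x), hy0, hhigh, hlow, hkx, hkx0]
      rw [hBval, ← div_eq_mul_inv, le_div_iff₀ hy0]; exact key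
    have hsq : 4 * (k:ℝ)^2 * x^2 ≤ 1/4 := by
      nlinarith [mul_le_mul_of_nonneg_left hkx hkx0]
    have hBhalf : (1:ℝ)/2 ≤ B p := by linarith
    have hB0 : 0 < B p := hBpos p
    have hlognp : Real.log (B p) ≤ 0 := Real.log_nonpos hB0.le hB1
    rw [Real.norm_eq_abs, abs_of_nonpos hlognp]
    have hloginv : -Real.log (B p) = Real.log (B p)⁻¹ := (Real.log_inv _).symm
    have hle := Real.log_le_sub_one_of_pos (inv_pos.mpr hB0)
    have hBinv2 : (B p)⁻¹ ≤ 2 := by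
      have h2 := inv_anti₀ (show (0:ℝ) < 1/2 by norm_num) hBhalf
      simpa using h2
    have e1 : (B p)⁻¹ - 1 = (1 - B p) * (B p)⁻¹ := by field_simp
    have e2 : (1 - B p) * (B p)⁻¹ ≤ (4 * (k:ℝ)^2 * x^2) * 2 := by
      apply mul_le_mul (by linarith) hBinv2 (inv_pos.mpr hB0).le
      positivity
    rw [hloginv]
    linarith
  -- summability of log B
  have hgsum : Summable (fun p : Nat.Primes => 8 * (k:ℝ)^2 * (1 / ((p : ℕ) : ℝ))^2) := by
    have h1 : Summable (fun n : ℕ => 8 * (k:ℝ)^2 * (1 / (n : ℝ))^2) := by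
      have := (Real.summable_one_div_nat_pow (p := 2)).mpr one_lt_two
      exact (this.mul_left (8 * (k:ℝ)^2)).congr (fun n => by rw [one_div, one_div, inv_pow])
    exact h1.comp_injective Nat.Primes.coe_nat_injective
  have hfin : {p : Nat.Primes | (p : ℕ) < N}.Finite := by
    have : {p : Nat.Primes | (p : ℕ) < N} =
        (fun p : Nat.Primes => (p : ℕ)) ⁻¹' (Set.Iio N) := rfl
    rw [this]
    exact Set.Finite.preimage (Set.injOn_of_injective Nat.Primes.coe_nat_injective)
      (Set.finite_Iio N)
  have hlog : Summable (fun p : Nat.Primes => Real.log (B p)) := by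
    apply Summable.of_norm_bounded_eventually hgsum
    rw [Filter.eventually_cofinite]
    apply hfin.subset
    intro p hp
    simp only [Set.mem_setOf_eq] at hp ⊢
    by_contra hcon
    exact hp (hlogbound p (by omega))
  -- multipliability and nonvanishing of ∏' B
  have hBmult : Multipliable B :=
    Real.multipliable_of_summable_log (fun p => hBpos p) hlog
  have hBprod : Real.exp (∑' p : Nat.Primes, Real.log (B p)) = ∏' p : Nat.Primes, B p := by
    have := Real.rexp_tsum_eq_tprod (fun p => hBpos p) hlog
    exact this
  have hBne : (∏' p : Nat.Primes, B p) ≠ 0 := by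
    rw [← hBprod]; exact (Real.exp_pos _).ne'
  -- finite product for c
  set s : Finset Nat.Primes := m.primeFactors.attach.image
    (fun q => (⟨q.1, Nat.prime_of_mem_primeFactors q.2⟩ : Nat.Primes)) with hs
  have hmem_s : ∀ p : Nat.Primes, (p : ℕ) ∣ m → p ∈ s := by
    intro p hdvd
    have hpf : (p : ℕ) ∈ m.primeFactors := Nat.mem_primeFactors.mpr ⟨p.2, hdvd, hm.ne'⟩
    exact Finset.mem_image.mpr ⟨⟨(p : ℕ), hpf⟩, Finset.mem_attach _ _, Subtype.ext rfl⟩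
  have hc_out : ∀ p ∉ s, c p = 1 := by
    intro p hp
    simp only [hc]
    rw [if_neg]
    intro hdvd
    exact hp (hmem_s p hdvd)
  have hcmult : Multipliable c := by
    apply multipliable_of_finite_mulSupport
    apply Set.Finite.subset s.finite_toSet
    intro p hp
    by_contra hns
    exact hp (hc_out p hns)
  have hcprod : (∏' p : Nat.Primes, c p) = ∏ p ∈ m.primeFactors, (1 - 1 / (p : ℝ)) := by
    rw [tprod_eq_prod hc_out, hs]
    refine (Finset.prod_image (by intro a _ b _ hab; exact Subtype.ext (congrArg (fun q : Nat.Primes => (q : ℕ)) hab))).trans ?_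
    rw [← Finset.prod_attach m.primeFactors (fun p => 1 - 1 / (p : ℝ))]
    apply Finset.prod_congr rfl
    intro q _
    simp only [hc]
    rw [if_pos (Nat.dvd_of_mem_primeFactors q.2)]
  -- assemble
  have hAmult : Multipliable A := (hcmult.mul hBmult).congr (fun p => (hAB p).symm)
  have hAprod : (∏' p : Nat.Primes, A p)
      = (∏' p : Nat.Primes, c p) * ∏' p : Nat.Primes, B p := by
    rw [tprod_congr hAB]
    exact Multipliable.tprod_mul hcmult hBmult
  show (∏' p : Nat.Primes, A p) / (∏' p : Nat.Primes, B p) = _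
  rw [hAprod, mul_div_assoc, div_self hBne, mul_one, hcprod]
end
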